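/- arXiv:2406.02526 — 2 statements merged into one kernel-verified Lean document; each statement's English description precedes it below -/
import Mathlib

section
/- Assume the admissibility hypothesis. Then for every r ≥ 0, the subset [X,Y]^{(r+1)} is a subgroup of the group [X,Y]. -/
/-- The wedge `X₁ ∨ X₂` of two pointed spaces: the quotient of `X₁ ⊔ X₂`
identifying the two basepoints. -/
def Wedge (X₁ X₂ : Type*) [TopologicalSpace X₁] [TopologicalSpace X₂] (p₁ : X₁) (p₂ : X₂) :=
  Quot fun a b : X₁ ⊕ X₂ => a = Sum.inl p₁ ∧ b = Sum.inr p₂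

instance (X₁ X₂ : Type*) [TopologicalSpace X₁] [TopologicalSpace X₂] (p₁ : X₁) (p₂ : X₂) :
    TopologicalSpace (Wedge X₁ X₂ p₁ p₂) :=
  inferInstanceAs (TopologicalSpace (Quot _))

namespace Wedge

variable (X₁ X₂ : Type*) [TopologicalSpace X₁] [TopologicalSpace X₂] (p₁ : X₁) (p₂ : X₂)

/-- The basepoint of the wedge. -/
def pt : Wedge X₁ X₂ p₁ p₂ := Quot.mk _ (Sum.inl p₁)

/-- The inclusion of the first summand. -/
def inl : C(X₁, Wedge X₁ X₂ p₁ p₂) :=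
  ⟨fun x => Quot.mk _ (Sum.inl x), continuous_quot_mk.comp continuous_inl⟩

/-- The inclusion of the second summand. -/
def inr : C(X₂, Wedge X₁ X₂ p₁ p₂) :=
  ⟨fun x => Quot.mk _ (Sum.inr x), continuous_quot_mk.comp continuous_inr⟩

theorem inl_pt : inl X₁ X₂ p₁ p₂ p₁ = pt X₁ X₂ p₁ p₂ := rfl

theorem inr_pt : inr X₁ X₂ p₁ p₂ p₂ = pt X₁ X₂ p₁ p₂ := (Quot.sound ⟨rfl, rfl⟩).symm

variable {X₁ X₂ p₁ p₂} {Y : Type*} [TopologicalSpace Y]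

/-- `a ∇ b` : the map `X₁ ∨ X₂ → Y` restricting to `a` and `b` on the two summands. -/
def elim (a : C(X₁, Y)) (b : C(X₂, Y)) (hab : a p₁ = b p₂) : C(Wedge X₁ X₂ p₁ p₂, Y) :=
  ⟨Quot.lift (Sum.elim a b)
      (by rintro s t ⟨hs, ht⟩; subst hs; subst ht; simpa using hab),
    continuous_quot_lift _ (a.continuous.sumElim b.continuous)⟩

end Wedge

/-- Basepoint-preserving continuous maps. -/
def PtdMap (X Y : Type*) [TopologicalSpace X] [TopologicalSpace Y] (x₀ : X) (y₀ : Y) :=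
  {f : C(X, Y) // f x₀ = y₀}

section Ptd

variable {X Y : Type*} [TopologicalSpace X] [TopologicalSpace Y] {x₀ : X} {y₀ : Y}

/-- The restriction homomorphism `⟨Y^X⟩ → ⟨Y^T⟩` on the free abelian group on
basepoint-preserving maps, `⟨a⟩ ↦ ⟨a|_T⟩`. -/
noncomputable def restrictEnsP (T : Set X) : (PtdMap X Y x₀ y₀ →₀ ℤ) →+ (C(T, Y) →₀ ℤ) :=
  Finsupp.mapDomain.addMonoidHom fun a => a.1.restrict T

/-- `A ∈ ⟨Y^X⟩^{(s)}`: the restriction of `A` to every finite subset with fewer than `s`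
points vanishes. -/
def inFiltP (s : ℕ) (A : PtdMap X Y x₀ y₀ →₀ ℤ) : Prop :=
  ∀ T : Set X, T.Finite → T.ncard < s → restrictEnsP T A = 0

/-- Basepoint-preserving homotopy: homotopy rel the basepoint. -/
def PHtpc (a b : PtdMap X Y x₀ y₀) : Prop :=
  ContinuousMap.HomotopicRel a.1 b.1 {x₀}

/-- `a ∼_r b` : some integral combination `A` of basepoint-preserving maps homotopic
to `a` satisfies `A ≡_r ⟨b⟩`, i.e. `A - ⟨b⟩ ∈ ⟨Y^X⟩^{(r+1)}`. -/
def similarP (r : ℕ) (a b : PtdMap X Y x₀ y₀) : Prop :=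
  ∃ A : PtdMap X Y x₀ y₀ →₀ ℤ, (∀ c ∈ A.support, PHtpc c a) ∧
    inFiltP (r + 1) (A - Finsupp.single b 1)

/-- The constant map `⊲` at the basepoint. -/
def constP : PtdMap X Y x₀ y₀ := ⟨ContinuousMap.const X y₀, rfl⟩

/-- `a ∇ b` for basepoint-preserving maps, as a basepoint-preserving map on the wedge. -/
def wedgeElimP (a b : PtdMap X Y x₀ y₀) :
    PtdMap (Wedge X X x₀ x₀) Y (Wedge.pt X X x₀ x₀) y₀ :=
  ⟨Wedge.elim a.1 b.1 (a.2.trans b.2.symm), a.2⟩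

/-- `a # b = (a ∇ b) ∘ μ`. -/
def hashP (μ : C(X, Wedge X X x₀ x₀)) (hμ : μ x₀ = Wedge.pt X X x₀ x₀)
    (a b : PtdMap X Y x₀ y₀) : PtdMap X Y x₀ y₀ :=
  ⟨(wedgeElimP a b).1.comp μ, by
    rw [ContinuousMap.comp_apply, hμ]; exact (wedgeElimP a b).2⟩

/-- `a† = a ∘ ν`. -/
def daggerP (ν : C(X, X)) (hν : ν x₀ = x₀) (a : PtdMap X Y x₀ y₀) : PtdMap X Y x₀ y₀ :=
  ⟨a.1.comp ν, by rw [ContinuousMap.comp_apply, hν]; exact a.2⟩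

end Ptd

/-- The setoid of basepoint-preserving homotopy. -/
def PSetoid (X Y : Type*) [TopologicalSpace X] [TopologicalSpace Y] (x₀ : X) (y₀ : Y) :
    Setoid (PtdMap X Y x₀ y₀) :=
  ⟨PHtpc, ⟨fun a => ContinuousMap.HomotopicRel.refl a.1,
    fun h => h.symm, fun h₁ h₂ => h₁.trans h₂⟩⟩

/-- The set `[X, Y]` of pointed homotopy classes. -/
def HCls (X Y : Type*) [TopologicalSpace X] [TopologicalSpace Y] (x₀ : X) (y₀ : Y) :=
  Quotient (PSetoid X Y x₀ y₀)

/-- The homotopy class `[a]` of a pointed map `a`. -/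
def cls {X Y : Type*} [TopologicalSpace X] [TopologicalSpace Y] {x₀ : X} {y₀ : Y}
    (a : PtdMap X Y x₀ y₀) : HCls X Y x₀ y₀ :=
  Quotient.mk _ a

/-- For `r ≥ 0`, `simSet r` is the subset `[X,Y]^{(r+1)}` of `[X,Y]`, consisting of the
classes of maps `a` with `⊲ ∼_r a`. -/
def simSet (X Y : Type*) [TopologicalSpace X] [TopologicalSpace Y] (x₀ : X) (y₀ : Y)
    (r : ℕ) : Set (HCls X Y x₀ y₀) :=
  {q | ∃ a : PtdMap X Y x₀ y₀, cls a = q ∧ similarP r constP a}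


open unitInterval

/-! ### Auxiliary lemmas -/

lemma mapDomain_zero_of_factor {α β γ : Type*} {f : α → β} {g : α → γ}
    (hfg : ∀ c c', f c = f c' → g c = g c') {A : α →₀ ℤ}
    (hA : Finsupp.mapDomain f A = 0) : Finsupp.mapDomain g A = 0 := by
  classical
  rcases eq_or_ne A 0 with h | h
  · simp [h]
  · have hne : Nonempty α := ⟨(Finsupp.support_nonempty_iff.mpr h).choose⟩
    have hg : g = (fun b => if hb : ∃ c, f c = b then g hb.choose
        else g (Classical.arbitrary α)) ∘ f := by
      funext c
      simp only [Function.comp_apply]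
      rw [dif_pos ⟨c, rfl⟩]
      exact (hfg _ _ (⟨c, rfl⟩ : ∃ c', f c' = f c).choose_spec).symm
    rw [hg, Finsupp.mapDomain_comp, hA, Finsupp.mapDomain_zero]

lemma mapDomain_sub' {α β : Type*} (f : α → β) (x y : α →₀ ℤ) :
    Finsupp.mapDomain f (x - y) = Finsupp.mapDomain f x - Finsupp.mapDomain f y :=
  (Finsupp.mapDomain.addMonoidHom f).map_sub x y

section Aux

variable {X Y : Type*} [TopologicalSpace X] [TopologicalSpace Y] {x₀ : X} {y₀ : Y}

lemma restrictEnsP_apply (T : Set X) (A : PtdMap X Y x₀ y₀ →₀ ℤ) :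
    restrictEnsP T A
      = Finsupp.mapDomain (fun a : PtdMap X Y x₀ y₀ => a.1.restrict T) A := rfl

/-- A choice of representative in `X ⊕ X` for each value of `μ`. -/
noncomputable def wrep (μ : C(X, Wedge X X x₀ x₀)) (x : X) : X ⊕ X :=
  (Quot.exists_rep (μ x)).choose

lemma wrep_spec (μ : C(X, Wedge X X x₀ x₀)) (x : X) :
    Quot.mk _ (wrep μ x) = μ x :=
  (Quot.exists_rep (μ x)).choose_spec

/-- The curried form of a homotopy, as a map into the path space. -/
def hcur {f g : C(X, Y)} {S : Set X} (H : f.HomotopyRel g S) : C(X, C(I, Y)) :=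
  (H.toContinuousMap.comp ContinuousMap.prodSwap).curry

lemma hcur_apply {f g : C(X, Y)} {S : Set X} (H : f.HomotopyRel g S) (x : X) (t : I) :
    hcur H x t = H (t, x) := rfl

variable (μ : C(X, Wedge X X x₀ x₀)) (hμ : μ x₀ = Wedge.pt X X x₀ x₀)
variable (ν : C(X, X)) (hν : ν x₀ = x₀)

lemma wedgeElim_mk {Z : Type*} [TopologicalSpace Z] (G₁ G₂ : C(X, Z))
    (hpt : G₁ x₀ = G₂ x₀) (s : X ⊕ X) :
    Wedge.elim G₁ G₂ hpt (Quot.mk _ s) = Sum.elim ⇑G₁ ⇑G₂ s := rfl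

lemma wedgeElim_pt {Z : Type*} [TopologicalSpace Z] (G₁ G₂ : C(X, Z))
    (hpt : G₁ x₀ = G₂ x₀) :
    Wedge.elim G₁ G₂ hpt (Wedge.pt X X x₀ x₀) = G₁ x₀ := rfl

lemma wedgeElimP_mk (c d : PtdMap X Y x₀ y₀) (s : X ⊕ X) :
    (wedgeElimP c d).1 (Quot.mk _ s) = Sum.elim ⇑c.1 ⇑d.1 s := rfl

lemma hashP_def (c d : PtdMap X Y x₀ y₀) (x : X) :
    (hashP μ hμ c d).1 x = (wedgeElimP c d).1 (μ x) := rfl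

lemma hashlike_apply (W' : C(Wedge X X x₀ x₀, C(I, Y))) (x : X) (t : I) :
    (((W'.comp μ).uncurry).comp ContinuousMap.prodSwap) (t, x) = W' (μ x) t := rfl

lemma hashP_apply (c d : PtdMap X Y x₀ y₀) (x : X) :
    (hashP μ hμ c d).1 x = Sum.elim c.1 d.1 (wrep μ x) := by
  rw [hashP_def, ← wrep_spec μ x, wedgeElimP_mk]

lemma hash_restrict_left (d : PtdMap X Y x₀ y₀) (T : Set X)
    {c c' : PtdMap X Y x₀ y₀}
    (h : c.1.restrict (Sum.inl ⁻¹' (wrep μ '' T) : Set X)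
        = c'.1.restrict (Sum.inl ⁻¹' (wrep μ '' T) : Set X)) :
    (hashP μ hμ c d).1.restrict T = (hashP μ hμ c' d).1.restrict T := by
  ext t
  simp only [ContinuousMap.restrict_apply, hashP_apply]
  rcases hr : wrep μ (t : X) with x | x
  · have hx : x ∈ (Sum.inl ⁻¹' (wrep μ '' T) : Set X) := ⟨(t : X), t.2, hr⟩
    have := ContinuousMap.congr_fun h ⟨x, hx⟩
    simpa using this
  · rfl

lemma hash_restrict_right (c : PtdMap X Y x₀ y₀) (T : Set X)
    {d d' : PtdMap X Y x₀ y₀}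
    (h : d.1.restrict (Sum.inr ⁻¹' (wrep μ '' T) : Set X)
        = d'.1.restrict (Sum.inr ⁻¹' (wrep μ '' T) : Set X)) :
    (hashP μ hμ c d).1.restrict T = (hashP μ hμ c d').1.restrict T := by
  ext t
  simp only [ContinuousMap.restrict_apply, hashP_apply]
  rcases hr : wrep μ (t : X) with x | x
  · rfl
  · have hx : x ∈ (Sum.inr ⁻¹' (wrep μ '' T) : Set X) := ⟨(t : X), t.2, hr⟩
    have := ContinuousMap.congr_fun h ⟨x, hx⟩
    simpa using this

lemma dagger_restrict (T : Set X) {c c' : PtdMap X Y x₀ y₀}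
    (h : c.1.restrict (ν '' T) = c'.1.restrict (ν '' T)) :
    (daggerP ν hν c).1.restrict T = (daggerP ν hν c').1.restrict T := by
  ext t
  have := ContinuousMap.congr_fun h ⟨ν t, ⟨(t : X), t.2, rfl⟩⟩
  exact this

lemma filt_hash_left {r : ℕ} {A : PtdMap X Y x₀ y₀ →₀ ℤ} (hA : inFiltP (r + 1) A)
    (d : PtdMap X Y x₀ y₀) (T : Set X) (hT : T.Finite) (hTc : T.ncard < r + 1) :
    restrictEnsP T (Finsupp.mapDomain (fun c => hashP μ hμ c d) A) = 0 := by
  classical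
  set S : Set X := Sum.inl ⁻¹' (wrep μ '' T) with hS
  have hSfin : S.Finite := (hT.image _).preimage Sum.inl_injective.injOn
  have hScard : S.ncard ≤ T.ncard :=
    le_trans (Set.ncard_le_ncard_of_injOn Sum.inl (fun a ha => ha)
      Sum.inl_injective.injOn (hT.image _)) (Set.ncard_image_le hT)
  have h0 : Finsupp.mapDomain (fun a : PtdMap X Y x₀ y₀ => a.1.restrict S) A = 0 :=
    hA S hSfin (lt_of_le_of_lt hScard hTc)
  rw [restrictEnsP_apply, ← Finsupp.mapDomain_comp]
  exact mapDomain_zero_of_factor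
    (fun c c' hcc => hash_restrict_left μ hμ d T hcc) h0

lemma filt_hash_right {r : ℕ} {B : PtdMap X Y x₀ y₀ →₀ ℤ} (hB : inFiltP (r + 1) B)
    (c : PtdMap X Y x₀ y₀) (T : Set X) (hT : T.Finite) (hTc : T.ncard < r + 1) :
    restrictEnsP T (Finsupp.mapDomain (fun d => hashP μ hμ c d) B) = 0 := by
  classical
  set S : Set X := Sum.inr ⁻¹' (wrep μ '' T) with hS
  have hSfin : S.Finite := (hT.image _).preimage Sum.inr_injective.injOn
  have hScard : S.ncard ≤ T.ncard :=
    le_trans (Set.ncard_le_ncard_of_injOn Sum.inr (fun a ha => ha)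
      Sum.inr_injective.injOn (hT.image _)) (Set.ncard_image_le hT)
  have h0 : Finsupp.mapDomain (fun a : PtdMap X Y x₀ y₀ => a.1.restrict S) B = 0 :=
    hB S hSfin (lt_of_le_of_lt hScard hTc)
  rw [restrictEnsP_apply, ← Finsupp.mapDomain_comp]
  exact mapDomain_zero_of_factor
    (fun d d' hdd => hash_restrict_right μ hμ c T hdd) h0

lemma filt_dagger {r : ℕ} {A : PtdMap X Y x₀ y₀ →₀ ℤ} (hA : inFiltP (r + 1) A)
    (T : Set X) (hT : T.Finite) (hTc : T.ncard < r + 1) :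
    restrictEnsP T (Finsupp.mapDomain (daggerP ν hν) A) = 0 := by
  have h0 : Finsupp.mapDomain (fun a : PtdMap X Y x₀ y₀ => a.1.restrict (ν '' T)) A = 0 :=
    hA (ν '' T) (hT.image _) (lt_of_le_of_lt (Set.ncard_image_le hT) hTc)
  rw [restrictEnsP_apply, ← Finsupp.mapDomain_comp]
  exact mapDomain_zero_of_factor (fun c c' hcc => dagger_restrict ν hν T hcc) h0

lemma hashP_htpc {c c' d d' : PtdMap X Y x₀ y₀} (hc : PHtpc c c') (hd : PHtpc d d') :
    PHtpc (hashP μ hμ c d) (hashP μ hμ c' d') := by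
  obtain ⟨H⟩ := hc
  obtain ⟨K⟩ := hd
  have hpt : hcur H x₀ = hcur K x₀ := by
    ext t
    rw [hcur_apply, hcur_apply, H.eq_fst t rfl, K.eq_fst t rfl, c.2, d.2]
  have hW0 : ∀ w, Wedge.elim (hcur H) (hcur K) hpt w 0 = (wedgeElimP c d).1 w := by
    intro w
    obtain ⟨s, rfl⟩ := Quot.exists_rep w
    rw [wedgeElim_mk, wedgeElimP_mk]
    cases s with
    | inl x => rw [Sum.elim_inl, Sum.elim_inl, hcur_apply]; exact H.apply_zero x
    | inr x => rw [Sum.elim_inr, Sum.elim_inr, hcur_apply]; exact K.apply_zero x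
  have hW1 : ∀ w, Wedge.elim (hcur H) (hcur K) hpt w 1 = (wedgeElimP c' d').1 w := by
    intro w
    obtain ⟨s, rfl⟩ := Quot.exists_rep w
    rw [wedgeElim_mk, wedgeElimP_mk]
    cases s with
    | inl x => rw [Sum.elim_inl, Sum.elim_inl, hcur_apply]; exact H.apply_one x
    | inr x => rw [Sum.elim_inr, Sum.elim_inr, hcur_apply]; exact K.apply_one x
  refine ⟨{ toContinuousMap := (((Wedge.elim (hcur H) (hcur K) hpt).comp μ).uncurry).comp
              ContinuousMap.prodSwap
            map_zero_left := ?_, map_one_left := ?_, prop' := ?_ }⟩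
  · intro x
    show (((Wedge.elim (hcur H) (hcur K) hpt).comp μ).uncurry).comp
        ContinuousMap.prodSwap (0, x) = (hashP μ hμ c d).1 x
    rw [hashlike_apply, hW0, hashP_def]
  · intro x
    show (((Wedge.elim (hcur H) (hcur K) hpt).comp μ).uncurry).comp
        ContinuousMap.prodSwap (1, x) = (hashP μ hμ c' d').1 x
    rw [hashlike_apply, hW1, hashP_def]
  · intro t x hx
    simp only [Set.mem_singleton_iff] at hx
    subst x
    show (((Wedge.elim (hcur H) (hcur K) hpt).comp μ).uncurry).comp
        ContinuousMap.prodSwap (t, x₀) = (hashP μ hμ c d).1 x₀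
    rw [hashlike_apply, hμ, wedgeElim_pt, hcur_apply, H.eq_fst t rfl, c.2,
      (hashP μ hμ c d).2]

lemma daggerP_htpc {c c' : PtdMap X Y x₀ y₀} (hc : PHtpc c c') :
    PHtpc (daggerP ν hν c) (daggerP ν hν c') := by
  obtain ⟨H⟩ := hc
  refine ⟨{ toContinuousMap :=
      H.toContinuousMap.comp ((ContinuousMap.id I).prodMap ν)
            map_zero_left := ?_, map_one_left := ?_, prop' := ?_ }⟩
  · intro x
    exact H.apply_zero (ν x)
  · intro x
    exact H.apply_one (ν x)
  · intro t x hx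
    simp only [Set.mem_singleton_iff] at hx
    subst x
    show H (t, ν x₀) = (daggerP ν hν c).1 x₀
    exact H.eq_fst t (by simp [hν])

lemma hashP_const_const :
    hashP μ hμ (constP : PtdMap X Y x₀ y₀) constP = constP := by
  apply Subtype.ext
  ext x
  rw [hashP_def μ hμ constP constP x]
  obtain ⟨s, hs⟩ := Quot.exists_rep (μ x)
  rw [← hs, wedgeElimP_mk]
  cases s <;> rfl

lemma daggerP_const :
    daggerP ν hν (constP : PtdMap X Y x₀ y₀) = constP :=
  Subtype.ext (ContinuousMap.ext fun _ => rfl)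

lemma hash_sub_key (A B : PtdMap X Y x₀ y₀ →₀ ℤ) (a b : PtdMap X Y x₀ y₀) :
    (A.sum fun c u => u • Finsupp.mapDomain (fun d => hashP μ hμ c d) B)
        - Finsupp.single (hashP μ hμ a b) 1
      = (A.sum fun c u => u • Finsupp.mapDomain (fun d => hashP μ hμ c d)
            (B - Finsupp.single b 1))
        + Finsupp.mapDomain (fun c => hashP μ hμ c b) (A - Finsupp.single a 1) := by
  have h1 : ∀ c : PtdMap X Y x₀ y₀,
      Finsupp.mapDomain (fun d => hashP μ hμ c d) (B - Finsupp.single b 1)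
        = Finsupp.mapDomain (fun d => hashP μ hμ c d) B
          - Finsupp.single (hashP μ hμ c b) 1 := fun c => by
    rw [mapDomain_sub', Finsupp.mapDomain_single]
  have h2 : (A.sum fun c u => Finsupp.single (hashP μ hμ c b) u)
      = Finsupp.mapDomain (fun c => hashP μ hμ c b) A := rfl
  simp only [h1, smul_sub, Finsupp.smul_single, smul_eq_mul, mul_one]
  rw [Finsupp.sum_sub, h2, mapDomain_sub', Finsupp.mapDomain_single]
  abel

lemma similar_hash {r : ℕ} {a b : PtdMap X Y x₀ y₀}
    (ha : similarP r constP a) (hb : similarP r constP b) :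
    similarP r constP (hashP μ hμ a b) := by
  classical
  obtain ⟨A, hAsupp, hAfilt⟩ := ha
  obtain ⟨B, hBsupp, hBfilt⟩ := hb
  refine ⟨A.sum fun c u => u • Finsupp.mapDomain (fun d => hashP μ hμ c d) B, ?_, ?_⟩
  · intro e he
    obtain ⟨c, hc, he2⟩ := Finset.mem_biUnion.mp (Finsupp.support_sum he)
    have he3 := Finsupp.support_smul he2
    obtain ⟨d, hd, rfl⟩ := Finset.mem_image.mp (Finsupp.mapDomain_support he3)
    have h1 := hashP_htpc μ hμ (hAsupp c hc) (hBsupp d hd)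
    rwa [hashP_const_const μ hμ] at h1
  · intro T hTfin hTcard
    rw [hash_sub_key, map_add]
    have hterm1 : restrictEnsP T (A.sum fun c u =>
        u • Finsupp.mapDomain (fun d => hashP μ hμ c d) (B - Finsupp.single b 1)) = 0 := by
      rw [map_finsuppSum]
      apply Finset.sum_eq_zero
      intro c _
      dsimp only
      rw [AddMonoidHom.map_zsmul,
        filt_hash_right μ hμ hBfilt c T hTfin hTcard, smul_zero]
    have hterm2 : restrictEnsP T
        (Finsupp.mapDomain (fun c => hashP μ hμ c b) (A - Finsupp.single a 1)) = 0 :=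
      filt_hash_left μ hμ hAfilt b T hTfin hTcard
    rw [hterm1, hterm2, add_zero]

lemma similar_dagger {r : ℕ} {a : PtdMap X Y x₀ y₀} (ha : similarP r constP a) :
    similarP r constP (daggerP ν hν a) := by
  classical
  obtain ⟨A, hAsupp, hAfilt⟩ := ha
  refine ⟨Finsupp.mapDomain (daggerP ν hν) A, ?_, ?_⟩
  · intro e he
    obtain ⟨c, hc, rfl⟩ := Finset.mem_image.mp (Finsupp.mapDomain_support he)
    have h1 := daggerP_htpc ν hν (hAsupp c hc)
    rwa [daggerP_const ν hν] at h1
  · intro T hTfin hTcard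
    have key : Finsupp.mapDomain (daggerP ν hν) A - Finsupp.single (daggerP ν hν a) 1
        = Finsupp.mapDomain (daggerP ν hν) (A - Finsupp.single a 1) := by
      rw [mapDomain_sub', Finsupp.mapDomain_single]
    rw [key]
    exact filt_dagger ν hν hAfilt T hTfin hTcard

end Aux

/-- Theorem 4.1: `[X,Y]^{(r+1)}` is a subgroup of the group `[X,Y]`: it contains the
identity `1 = [⊲]` and is closed under the multiplication and the inversion. -/
theorem stmt3 {X Y : Type*} [TopologicalSpace X] [TopologicalSpace Y] (x₀ : X) (y₀ : Y)
    -- the comultiplication and coinversion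
    (μ : C(X, Wedge X X x₀ x₀)) (hμ : μ x₀ = Wedge.pt X X x₀ x₀)
    (ν : C(X, X)) (hν : ν x₀ = x₀)
    -- admissibility hypothesis: multiplication and inversion are well defined on
    -- homotopy classes (being given by functions on `[X,Y]`), are induced by `#` and `†`,
    -- and make `[X,Y]` a group with identity `[⊲]`
    (mul : HCls X Y x₀ y₀ → HCls X Y x₀ y₀ → HCls X Y x₀ y₀)
    (inv : HCls X Y x₀ y₀ → HCls X Y x₀ y₀)
    (hmul : ∀ a b : PtdMap X Y x₀ y₀, mul (cls a) (cls b) = cls (hashP μ hμ a b))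
    (hinv : ∀ a : PtdMap X Y x₀ y₀, inv (cls a) = cls (daggerP ν hν a))
    (hassoc : ∀ p q s : HCls X Y x₀ y₀, mul (mul p q) s = mul p (mul q s))
    (hone_mul : ∀ p, mul (cls (constP : PtdMap X Y x₀ y₀)) p = p)
    (hmul_one : ∀ p, mul p (cls (constP : PtdMap X Y x₀ y₀)) = p)
    (hinv_mul : ∀ p, mul (inv p) p = cls (constP : PtdMap X Y x₀ y₀))
    (r : ℕ) :
    cls (constP : PtdMap X Y x₀ y₀) ∈ simSet X Y x₀ y₀ r ∧
      (∀ p ∈ simSet X Y x₀ y₀ r, ∀ q ∈ simSet X Y x₀ y₀ r,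
        mul p q ∈ simSet X Y x₀ y₀ r) ∧
      (∀ p ∈ simSet X Y x₀ y₀ r, inv p ∈ simSet X Y x₀ y₀ r) := by
  refine ⟨⟨constP, rfl, ?_⟩, ?_, ?_⟩
  · refine ⟨Finsupp.single constP 1, fun c hc => ?_, ?_⟩
    · have hmem := Finsupp.support_single_subset hc
      rw [Finset.mem_singleton] at hmem
      subst hmem
      exact ContinuousMap.HomotopicRel.refl _
    · rw [sub_self]
      intro T h1 h2
      exact map_zero _
  · rintro p ⟨a, rfl, ha⟩ q ⟨b, rfl, hb⟩
    exact ⟨hashP μ hμ a b, (hmul a b).symm, similar_hash μ hμ ha hb⟩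
  · rintro p ⟨a, rfl, ha⟩
    exact ⟨daggerP ν hν a, (hinv a).symm, similar_dagger ν hν ha⟩
end

section
/- Assume the admissibility hypothesis. For s ≥ 1 put M^s = [X,Y]^{(s)} ⊆ [X,Y]. Then for all p, q ≥ 1, the group commutator satisfies [[M^p, M^q]] ⊆ M^{p+q}; that is, for any 𝐚 ∈ [X,Y]^{(p)} and 𝐛 ∈ [X,Y]^{(q)}, the commutator 𝐚⁻¹𝐛⁻¹𝐚𝐛 lies in [X,Y]^{(p+q)}. -/
section AuxPair

open Finsupp

/-- Generic bilinear pairing on finitely-supported ℤ-combinations. -/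
noncomputable def pairFF {α β γ : Type*} (f : α → β → γ) :
    (α →₀ ℤ) →+ (β →₀ ℤ) →+ (γ →₀ ℤ) :=
  Finsupp.liftAddHom fun a => zmultiplesHom _ (Finsupp.mapDomain.addMonoidHom (f a))

lemma pairFF_single_single {α β γ : Type*} (f : α → β → γ) (a : α) (b : β) (m n : ℤ) :
    pairFF f (Finsupp.single a m) (Finsupp.single b n) = Finsupp.single (f a b) (m * n) := by
  rw [pairFF, Finsupp.liftAddHom_apply_single]
  show (m • Finsupp.mapDomain.addMonoidHom (f a)) (Finsupp.single b n) = _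
  rw [AddMonoidHom.smul_apply]
  show m • Finsupp.mapDomain (f a) (Finsupp.single b n) = _
  rw [Finsupp.mapDomain_single, Finsupp.smul_single, smul_eq_mul]

lemma pairFF_apply {α β γ : Type*} (f : α → β → γ) (A : α →₀ ℤ) (B : β →₀ ℤ) :
    pairFF f A B = A.sum fun a m => m • Finsupp.mapDomain (f a) B := by
  rw [pairFF, Finsupp.liftAddHom_apply]
  simp [Finsupp.sum, AddMonoidHom.finset_sum_apply]

lemma pairFF_support {α β γ : Type*} (f : α → β → γ) (A : α →₀ ℤ) (B : β →₀ ℤ)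
    (c : γ) (hc : c ∈ (pairFF f A B).support) :
    ∃ a ∈ A.support, ∃ b ∈ B.support, c = f a b := by
  classical
  rw [pairFF_apply] at hc
  have h1 := Finsupp.support_sum hc
  rw [Finset.mem_biUnion] at h1
  obtain ⟨a, ha, hc2⟩ := h1
  have hc3 := Finsupp.support_smul hc2
  have hc4 := Finsupp.mapDomain_support hc3
  obtain ⟨b, hb, rfl⟩ := Finset.mem_image.mp hc4
  exact ⟨a, ha, b, hb, rfl⟩

end AuxPair
section AuxRes

variable {X Y : Type*} [TopologicalSpace X] [TopologicalSpace Y] {x₀ : X} {y₀ : Y}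

/-- Restriction to a subset, landing in bare functions. -/
noncomputable def resF (S : Set X) : (PtdMap X Y x₀ y₀ →₀ ℤ) →+ ((S → Y) →₀ ℤ) :=
  Finsupp.mapDomain.addMonoidHom fun a => fun s : S => a.1 s

lemma restrictEnsP_eq_zero_iff (S : Set X) (A : PtdMap X Y x₀ y₀ →₀ ℤ) :
    restrictEnsP S A = 0 ↔ resF S A = 0 := by
  have h : (resF (x₀ := x₀) (y₀ := y₀) S) A
      = Finsupp.mapDomain (fun g : C(S, Y) => ⇑g) (restrictEnsP S A) := by
    show Finsupp.mapDomain _ A = _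
    rw [show (restrictEnsP (x₀ := x₀) (y₀ := y₀) S) A
        = Finsupp.mapDomain (fun a : PtdMap X Y x₀ y₀ => a.1.restrict S) A from rfl,
      ← Finsupp.mapDomain_comp]
    rfl
  constructor
  · intro h0
    rw [h, h0, Finsupp.mapDomain_zero]
  · intro h0
    apply Finsupp.mapDomain_injective (DFunLike.coe_injective (F := C(S, Y)))
    rw [← h, h0, Finsupp.mapDomain_zero]

lemma inFiltP_iff_resF (s : ℕ) (A : PtdMap X Y x₀ y₀ →₀ ℤ) :
    inFiltP s A ↔ ∀ T : Set X, T.Finite → T.ncard < s → resF T A = 0 := by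
  unfold inFiltP
  exact forall_congr' fun T => imp_congr_right fun _ => imp_congr_right fun _ =>
    restrictEnsP_eq_zero_iff T A

lemma inFiltP_add {s : ℕ} {A B : PtdMap X Y x₀ y₀ →₀ ℤ}
    (hA : inFiltP s A) (hB : inFiltP s B) : inFiltP s (A + B) := by
  intro T hT h
  rw [map_add, hA T hT h, hB T hT h, add_zero]

lemma inFiltP_neg {s : ℕ} {A : PtdMap X Y x₀ y₀ →₀ ℤ}
    (hA : inFiltP s A) : inFiltP s (-A) := by
  intro T hT h
  rw [map_neg, hA T hT h, neg_zero]

end AuxRes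
section AuxHash

variable {X Y : Type*} [TopologicalSpace X] [TopologicalSpace Y] {x₀ : X} {y₀ : Y}

/-- The points of `X` hit in the left wedge summand by (chosen representatives of)
`μ`-images of points of `T`. -/
def wSetL (μ : C(X, Wedge X X x₀ x₀)) (T : Set X) : Set X :=
  Sum.inl ⁻¹' ((fun t => Quot.out (μ t)) '' T)

/-- Right-summand analogue of `wSetL`. -/
def wSetR (μ : C(X, Wedge X X x₀ x₀)) (T : Set X) : Set X :=
  Sum.inr ⁻¹' ((fun t => Quot.out (μ t)) '' T)

/-- The splitting function recording where each point of `T` goes. -/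
noncomputable def wE (μ : C(X, Wedge X X x₀ x₀)) (T : Set X) (t : T) :
    (wSetL μ T) ⊕ (wSetR μ T) :=
  match h : Quot.out (μ t.1) with
  | Sum.inl x => Sum.inl ⟨x, ⟨t.1, t.2, h⟩⟩
  | Sum.inr x => Sum.inr ⟨x, ⟨t.1, t.2, h⟩⟩

lemma wE_spec (μ : C(X, Wedge X X x₀ x₀)) (T : Set X) (t : T) :
    Sum.elim (fun s : wSetL μ T => Sum.inl (s : X))
      (fun s : wSetR μ T => Sum.inr (s : X)) (wE μ T t) = Quot.out (μ t.1) := by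
  unfold wE
  split <;> simp_all

lemma hashP_apply_s6 (μ : C(X, Wedge X X x₀ x₀)) (hμ : μ x₀ = Wedge.pt X X x₀ x₀)
    (u v : PtdMap X Y x₀ y₀) (t : X) :
    (hashP μ hμ u v).1 t = Sum.elim (fun x => u.1 x) (fun x => v.1 x) (Quot.out (μ t)) := by
  have h : μ t = Quot.mk _ (Quot.out (μ t)) := (Quot.out_eq _).symm
  show (wedgeElimP u v).1 (μ t) = _
  conv_lhs => rw [h]
  rfl

lemma hash_factor (μ : C(X, Wedge X X x₀ x₀)) (hμ : μ x₀ = Wedge.pt X X x₀ x₀)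
    (T : Set X) (hT : T.Finite) :
    ∃ S₁ S₂ : Set X, S₁.Finite ∧ S₂.Finite ∧ S₁.ncard + S₂.ncard ≤ T.ncard ∧
      ∀ A B : PtdMap X Y x₀ y₀ →₀ ℤ, (resF S₁ A = 0 ∨ resF S₂ B = 0) →
        resF T (pairFF (hashP μ hμ) A B) = 0 := by
  classical
  set U : Set (X ⊕ X) := (fun t => Quot.out (μ t)) '' T with hU
  have hUfin : U.Finite := hT.image _
  have hS₁fin : (wSetL μ T).Finite := hUfin.preimage Sum.inl_injective.injOn
  have hS₂fin : (wSetR μ T).Finite := hUfin.preimage Sum.inr_injective.injOn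
  have hcard : (wSetL μ T).ncard + (wSetR μ T).ncard ≤ T.ncard := by
    have h1 : (wSetL μ T).ncard = (Sum.inl '' (wSetL μ T) : Set (X ⊕ X)).ncard :=
      (Set.ncard_image_of_injective _ Sum.inl_injective).symm
    have h2 : (wSetR μ T).ncard = (Sum.inr '' (wSetR μ T) : Set (X ⊕ X)).ncard :=
      (Set.ncard_image_of_injective _ Sum.inr_injective).symm
    have hdisj : Disjoint (Sum.inl '' (wSetL μ T)) (Sum.inr '' (wSetR μ T)) := by
      rw [Set.disjoint_left]
      rintro z ⟨x, _, rfl⟩ ⟨y, _, h⟩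
      exact absurd h.symm (by simp)
    have hsub : Sum.inl '' (wSetL μ T) ∪ Sum.inr '' (wSetR μ T) ⊆ U := by
      apply Set.union_subset <;> exact Set.image_preimage_subset _ _
    have hun : (Sum.inl '' (wSetL μ T) ∪ Sum.inr '' (wSetR μ T)).ncard
        = (Sum.inl '' (wSetL μ T)).ncard + (Sum.inr '' (wSetR μ T)).ncard :=
      Set.ncard_union_eq hdisj (hS₁fin.image _) (hS₂fin.image _)
    calc (wSetL μ T).ncard + (wSetR μ T).ncard
        = (Sum.inl '' (wSetL μ T) ∪ Sum.inr '' (wSetR μ T)).ncard := by rw [hun, h1, h2]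
      _ ≤ U.ncard := Set.ncard_le_ncard hsub hUfin
      _ ≤ T.ncard := Set.ncard_image_le hT
  refine ⟨wSetL μ T, wSetR μ T, hS₁fin, hS₂fin, hcard, ?_⟩
  -- the factorization identity
  set Φ : ((wSetL μ T) → Y) → ((wSetR μ T) → Y) → (T → Y) :=
    fun f g => Sum.elim f g ∘ wE μ T with hΦ
  have hfact : ∀ A B : PtdMap X Y x₀ y₀ →₀ ℤ,
      resF T (pairFF (hashP μ hμ) A B)
        = pairFF Φ (resF (wSetL μ T) A) (resF (wSetR μ T) B) := by
    intro A B
    induction A using Finsupp.induction_linear with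
    | zero => simp [map_zero, AddMonoidHom.zero_apply]
    | add f g hf hg => simp [map_add, AddMonoidHom.add_apply, hf, hg]
    | single u m =>
      induction B using Finsupp.induction_linear with
      | zero => simp [map_zero, AddMonoidHom.zero_apply]
      | add f g hf hg => simp [map_add, AddMonoidHom.add_apply, hf, hg]
      | single v n =>
        rw [pairFF_single_single]
        rw [show (resF (x₀ := x₀) (y₀ := y₀) T) (Finsupp.single (hashP μ hμ u v) (m * n))
            = Finsupp.single (fun t : T => (hashP μ hμ u v).1 t) (m * n) from
          Finsupp.mapDomain_single]
        rw [show (resF (x₀ := x₀) (y₀ := y₀) (wSetL μ T)) (Finsupp.single u m)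
            = Finsupp.single (fun s : wSetL μ T => u.1 s) m from Finsupp.mapDomain_single]
        rw [show (resF (x₀ := x₀) (y₀ := y₀) (wSetR μ T)) (Finsupp.single v n)
            = Finsupp.single (fun s : wSetR μ T => v.1 s) n from Finsupp.mapDomain_single]
        rw [pairFF_single_single]
        congr 1
        funext t
        rw [hΦ]
        show (hashP μ hμ u v).1 t
          = Sum.elim (fun s : wSetL μ T => u.1 s) (fun s : wSetR μ T => v.1 s) (wE μ T t)
        rw [hashP_apply_s6, ← wE_spec μ T t]
        cases wE μ T t with
        | inl s => rfl
        | inr s => rfl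
  intro A B h0
  rw [hfact A B]
  rcases h0 with h0 | h0
  · rw [h0, map_zero, AddMonoidHom.zero_apply]
  · rw [h0, map_zero]

end AuxHash
section AuxFilt

variable {X Y : Type*} [TopologicalSpace X] [TopologicalSpace Y] {x₀ : X} {y₀ : Y}
variable (μ : C(X, Wedge X X x₀ x₀)) (hμ : μ x₀ = Wedge.pt X X x₀ x₀)
variable (ν : C(X, X)) (hν : ν x₀ = x₀)

lemma inFiltP_hash_left {s : ℕ} {A B : PtdMap X Y x₀ y₀ →₀ ℤ} (hA : inFiltP s A) :
    inFiltP s (pairFF (hashP μ hμ) A B) := by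
  rw [inFiltP_iff_resF] at hA ⊢
  intro T hT hcard
  obtain ⟨S₁, S₂, h₁, h₂, hle, hfac⟩ := hash_factor (y₀ := y₀) μ hμ T hT
  exact hfac A B (Or.inl (hA S₁ h₁ (by omega)))

lemma inFiltP_hash_right {s : ℕ} {A B : PtdMap X Y x₀ y₀ →₀ ℤ} (hB : inFiltP s B) :
    inFiltP s (pairFF (hashP μ hμ) A B) := by
  rw [inFiltP_iff_resF] at hB ⊢
  intro T hT hcard
  obtain ⟨S₁, S₂, h₁, h₂, hle, hfac⟩ := hash_factor (y₀ := y₀) μ hμ T hT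
  exact hfac A B (Or.inr (hB S₂ h₂ (by omega)))

lemma inFiltP_hash_mul {p q : ℕ} {A B : PtdMap X Y x₀ y₀ →₀ ℤ}
    (hA : inFiltP p A) (hB : inFiltP q B) :
    inFiltP (p + q) (pairFF (hashP μ hμ) A B) := by
  rw [inFiltP_iff_resF] at hA hB ⊢
  intro T hT hcard
  obtain ⟨S₁, S₂, h₁, h₂, hle, hfac⟩ := hash_factor (y₀ := y₀) μ hμ T hT
  rcases lt_or_ge S₁.ncard p with h | h
  · exact hfac A B (Or.inl (hA S₁ h₁ h))
  · exact hfac A B (Or.inr (hB S₂ h₂ (by omega)))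

lemma dagger_factor (T : Set X) (hT : T.Finite) :
    ∃ S : Set X, S.Finite ∧ S.ncard ≤ T.ncard ∧
      ∀ A : PtdMap X Y x₀ y₀ →₀ ℤ, resF S A = 0 →
        resF T (Finsupp.mapDomain (daggerP ν hν) A) = 0 := by
  classical
  refine ⟨ν '' T, hT.image _, Set.ncard_image_le hT, ?_⟩
  have hfac : ∀ A : PtdMap X Y x₀ y₀ →₀ ℤ,
      resF T (Finsupp.mapDomain (daggerP ν hν) A)
        = Finsupp.mapDomain (fun f : (ν '' T : Set X) → Y =>
            f ∘ fun t : T => (⟨ν t, ⟨t.1, t.2, rfl⟩⟩ : (ν '' T : Set X)))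
            (resF (ν '' T) A) := by
    intro A
    induction A using Finsupp.induction_linear with
    | zero => simp [map_zero]
    | add f g hf hg => simp [map_add, Finsupp.mapDomain_add, hf, hg]
    | single u m =>
      rw [Finsupp.mapDomain_single]
      rw [show (resF (x₀ := x₀) (y₀ := y₀) T) (Finsupp.single (daggerP ν hν u) m)
          = Finsupp.single (fun t : T => (daggerP ν hν u).1 t) m from Finsupp.mapDomain_single]
      rw [show (resF (x₀ := x₀) (y₀ := y₀) (ν '' T)) (Finsupp.single u m)
          = Finsupp.single (fun s : (ν '' T : Set X) => u.1 s) m from Finsupp.mapDomain_single]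
      rw [Finsupp.mapDomain_single]
      rfl
  intro A h0
  rw [hfac A, h0, Finsupp.mapDomain_zero]

lemma inFiltP_dagger {s : ℕ} {A : PtdMap X Y x₀ y₀ →₀ ℤ} (hA : inFiltP s A) :
    inFiltP s (Finsupp.mapDomain (daggerP ν hν) A) := by
  rw [inFiltP_iff_resF] at hA ⊢
  intro T hT hcard
  obtain ⟨S, hS, hle, hfac⟩ := dagger_factor (y₀ := y₀) ν hν T hT
  exact hfac A (hA S hS (by omega))

end AuxFilt
section AuxQ

variable {X Y : Type*} [TopologicalSpace X] [TopologicalSpace Y] {x₀ : X} {y₀ : Y}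

/-- The quadrilinear map `(U₁,U₂,U₃,U₄) ↦ ((U₁ # U₂) # U₃) # U₄` on combinations. -/
noncomputable def QF (μ : C(X, Wedge X X x₀ x₀)) (hμ : μ x₀ = Wedge.pt X X x₀ x₀)
    (U1 U2 U3 U4 : PtdMap X Y x₀ y₀ →₀ ℤ) : PtdMap X Y x₀ y₀ →₀ ℤ :=
  pairFF (hashP μ hμ) (pairFF (hashP μ hμ) (pairFF (hashP μ hμ) U1 U2) U3) U4

lemma QF_support (μ : C(X, Wedge X X x₀ x₀)) (hμ : μ x₀ = Wedge.pt X X x₀ x₀)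
    (U1 U2 U3 U4 : PtdMap X Y x₀ y₀ →₀ ℤ) (c : PtdMap X Y x₀ y₀)
    (hc : c ∈ (QF μ hμ U1 U2 U3 U4).support) :
    ∃ c1 ∈ U1.support, ∃ c2 ∈ U2.support, ∃ c3 ∈ U3.support, ∃ c4 ∈ U4.support,
      c = hashP μ hμ (hashP μ hμ (hashP μ hμ c1 c2) c3) c4 := by
  obtain ⟨w3, hw3, c4, hc4, rfl⟩ := pairFF_support _ _ _ c hc
  obtain ⟨w2, hw2, c3, hc3, rfl⟩ := pairFF_support _ _ _ _ hw3
  obtain ⟨c1, hc1, c2, hc2, rfl⟩ := pairFF_support _ _ _ _ hw2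
  exact ⟨c1, hc1, c2, hc2, c3, hc3, c4, hc4, rfl⟩

lemma QF_single (μ : C(X, Wedge X X x₀ x₀)) (hμ : μ x₀ = Wedge.pt X X x₀ x₀)
    (u1 u2 u3 u4 : PtdMap X Y x₀ y₀) :
    QF μ hμ (Finsupp.single u1 1) (Finsupp.single u2 1) (Finsupp.single u3 1)
        (Finsupp.single u4 1)
      = Finsupp.single (hashP μ hμ (hashP μ hμ (hashP μ hμ u1 u2) u3) u4) 1 := by
  rw [QF, pairFF_single_single, one_mul, pairFF_single_single, one_mul,
    pairFF_single_single, one_mul]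

end AuxQ
/-- Theorem 4.3: with `M^s = [X,Y]^{(s)}` (`s ≥ 1`), commutators satisfy
`[[M^p, M^q]] ⊆ M^{p+q}`.  Here `[X,Y]^{(s)}` is `simSet (s-1)`. -/
theorem stmt6 {X Y : Type*} [TopologicalSpace X] [TopologicalSpace Y] (x₀ : X) (y₀ : Y)
    -- the comultiplication and coinversion
    (μ : C(X, Wedge X X x₀ x₀)) (hμ : μ x₀ = Wedge.pt X X x₀ x₀)
    (ν : C(X, X)) (hν : ν x₀ = x₀)
    -- admissibility hypothesis: multiplication and inversion are well defined on
    -- homotopy classes (being given by functions on `[X,Y]`), are induced by `#` and `†`,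
    -- and make `[X,Y]` a group with identity `[⊲]`
    (mul : HCls X Y x₀ y₀ → HCls X Y x₀ y₀ → HCls X Y x₀ y₀)
    (inv : HCls X Y x₀ y₀ → HCls X Y x₀ y₀)
    (hmul : ∀ a b : PtdMap X Y x₀ y₀, mul (cls a) (cls b) = cls (hashP μ hμ a b))
    (hinv : ∀ a : PtdMap X Y x₀ y₀, inv (cls a) = cls (daggerP ν hν a))
    (hassoc : ∀ p q s : HCls X Y x₀ y₀, mul (mul p q) s = mul p (mul q s))
    (hone_mul : ∀ p, mul (cls (constP : PtdMap X Y x₀ y₀)) p = p)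
    (hmul_one : ∀ p, mul p (cls (constP : PtdMap X Y x₀ y₀)) = p)
    (hinv_mul : ∀ p, mul (inv p) p = cls (constP : PtdMap X Y x₀ y₀))
    (p q : ℕ) (hp : 1 ≤ p) (hq : 1 ≤ q) :
    ∀ x ∈ simSet X Y x₀ y₀ (p - 1), ∀ y ∈ simSet X Y x₀ y₀ (q - 1),
      mul (mul (mul (inv x) (inv y)) x) y ∈ simSet X Y x₀ y₀ (p + q - 1) := by
  classical
  intro x hx y hy
  obtain ⟨a, rfl, A, hAsupp, hAfilt⟩ := hx
  obtain ⟨b, rfl, B, hBsupp, hBfilt⟩ := hy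
  rw [show p - 1 + 1 = p from by omega] at hAfilt
  rw [show q - 1 + 1 = q from by omega] at hBfilt
  -- notation
  have hclsQ : ∀ c1 c2 c3 c4 : PtdMap X Y x₀ y₀,
      cls (hashP μ hμ (hashP μ hμ (hashP μ hμ c1 c2) c3) c4)
        = mul (mul (mul (cls c1) (cls c2)) (cls c3)) (cls c4) := by
    intro c1 c2 c3 c4
    rw [hmul, hmul, hmul]
  have hinv_one : inv (cls (constP : PtdMap X Y x₀ y₀)) = cls constP :=
    (hmul_one _).symm.trans (hinv_mul _)
  have hA0 : ∀ c ∈ A.support, cls c = cls (constP : PtdMap X Y x₀ y₀) :=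
    fun c hc => Quot.sound (hAsupp c hc)
  have hB0 : ∀ c ∈ B.support, cls c = cls (constP : PtdMap X Y x₀ y₀) :=
    fun c hc => Quot.sound (hBsupp c hc)
  have hDA0 : ∀ c ∈ (Finsupp.mapDomain (daggerP ν hν) A).support,
      cls c = cls (constP : PtdMap X Y x₀ y₀) := by
    intro c hc
    obtain ⟨c₀, hc₀, rfl⟩ := Finset.mem_image.mp (Finsupp.mapDomain_support hc)
    rw [← hinv, hA0 c₀ hc₀, hinv_one]
  have hDB0 : ∀ c ∈ (Finsupp.mapDomain (daggerP ν hν) B).support,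
      cls c = cls (constP : PtdMap X Y x₀ y₀) := by
    intro c hc
    obtain ⟨c₀, hc₀, rfl⟩ := Finset.mem_image.mp (Finsupp.mapDomain_support hc)
    rw [← hinv, hB0 c₀ hc₀, hinv_one]
  refine ⟨hashP μ hμ (hashP μ hμ (hashP μ hμ (daggerP ν hν a) (daggerP ν hν b)) a) b,
    by rw [hinv, hinv, hmul, hmul, hmul], ?_⟩
  -- the three admissible patterns
  refine ⟨QF μ hμ (Finsupp.single (daggerP ν hν a) 1) (Finsupp.mapDomain (daggerP ν hν) B)
        (Finsupp.single a 1) B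
      + QF μ hμ (Finsupp.mapDomain (daggerP ν hν) A) (Finsupp.single (daggerP ν hν b) 1) A
        (Finsupp.single b 1)
      - QF μ hμ (Finsupp.mapDomain (daggerP ν hν) A) (Finsupp.mapDomain (daggerP ν hν) B) A B,
    ?_, ?_⟩
  · -- all support elements are null-homotopic
    intro c hc
    have hc2 := Finsupp.support_sub (by exact hc)
    rw [Finset.mem_union] at hc2
    have hmain : cls c = cls (constP : PtdMap X Y x₀ y₀) := by
      rcases hc2 with hc2 | hc2
      · have hc3 := Finsupp.support_add hc2
        rw [Finset.mem_union] at hc3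
        rcases hc3 with hc3 | hc3
        · obtain ⟨c1, hc1, c2, hcc2, c3, hc3', c4, hc4, rfl⟩ := QF_support μ hμ _ _ _ _ c hc3
          rw [Finset.mem_singleton.mp (Finsupp.support_single_subset hc1),
            Finset.mem_singleton.mp (Finsupp.support_single_subset hc3')] at *
          rw [hclsQ, hDB0 c2 hcc2, hB0 c4 hc4, ← hinv, hmul_one, hmul_one, hinv_mul]
        · obtain ⟨c1, hc1, c2, hcc2, c3, hc3', c4, hc4, rfl⟩ := QF_support μ hμ _ _ _ _ c hc3
          rw [Finset.mem_singleton.mp (Finsupp.support_single_subset hcc2),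
            Finset.mem_singleton.mp (Finsupp.support_single_subset hc4)] at *
          rw [hclsQ, hDA0 c1 hc1, hA0 c3 hc3', ← hinv, hone_mul, hmul_one, hinv_mul]
      · obtain ⟨c1, hc1, c2, hcc2, c3, hc3', c4, hc4, rfl⟩ := QF_support μ hμ _ _ _ _ c hc2
        rw [hclsQ, hDA0 c1 hc1, hDB0 c2 hcc2, hA0 c3 hc3', hB0 c4 hc4,
          hmul_one, hmul_one, hmul_one]
    exact Quotient.exact hmain
  · -- the filtration estimate
    rw [show p + q - 1 + 1 = p + q from by omega]
    obtain ⟨δ₁, hDA1, h1f⟩ :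
        ∃ δ, Finsupp.mapDomain (daggerP ν hν) A = Finsupp.single (daggerP ν hν a) 1 + δ
          ∧ inFiltP p δ := by
      refine ⟨Finsupp.mapDomain (daggerP ν hν) A - Finsupp.single (daggerP ν hν a) 1,
        by abel, ?_⟩
      have h : Finsupp.mapDomain (daggerP ν hν) A - Finsupp.single (daggerP ν hν a) 1
          = Finsupp.mapDomain (daggerP ν hν) (A - Finsupp.single a 1) := by
        rw [show Finsupp.mapDomain (daggerP ν hν) (A - Finsupp.single a 1)
            = Finsupp.mapDomain.addMonoidHom (daggerP ν hν) (A - Finsupp.single a 1) from rfl,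
          map_sub]
        rw [show (Finsupp.mapDomain.addMonoidHom (daggerP ν hν)) (Finsupp.single a (1:ℤ))
            = Finsupp.single (daggerP ν hν a) (1:ℤ) from Finsupp.mapDomain_single]
        rfl
      rw [h]
      exact inFiltP_dagger ν hν hAfilt
    obtain ⟨δ₂, hDB1, h2f⟩ :
        ∃ δ, Finsupp.mapDomain (daggerP ν hν) B = Finsupp.single (daggerP ν hν b) 1 + δ
          ∧ inFiltP q δ := by
      refine ⟨Finsupp.mapDomain (daggerP ν hν) B - Finsupp.single (daggerP ν hν b) 1,
        by abel, ?_⟩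
      have h : Finsupp.mapDomain (daggerP ν hν) B - Finsupp.single (daggerP ν hν b) 1
          = Finsupp.mapDomain (daggerP ν hν) (B - Finsupp.single b 1) := by
        rw [show Finsupp.mapDomain (daggerP ν hν) (B - Finsupp.single b 1)
            = Finsupp.mapDomain.addMonoidHom (daggerP ν hν) (B - Finsupp.single b 1) from rfl,
          map_sub]
        rw [show (Finsupp.mapDomain.addMonoidHom (daggerP ν hν)) (Finsupp.single b (1:ℤ))
            = Finsupp.single (daggerP ν hν b) (1:ℤ) from Finsupp.mapDomain_single]
        rfl
      rw [h]
      exact inFiltP_dagger ν hν hBfilt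
    obtain ⟨δ₃, hA3⟩ : ∃ δ, A = Finsupp.single a 1 + δ := ⟨A - Finsupp.single a 1, by abel⟩
    have h3f : inFiltP p δ₃ := by rwa [hA3, add_sub_cancel_left] at hAfilt
    obtain ⟨δ₄, hB4⟩ : ∃ δ, B = Finsupp.single b 1 + δ := ⟨B - Finsupp.single b 1, by abel⟩
    have h4f : inFiltP q δ₄ := by rwa [hB4, add_sub_cancel_left] at hBfilt
    have hkey :
        QF μ hμ (Finsupp.single (daggerP ν hν a) 1) (Finsupp.mapDomain (daggerP ν hν) B)
            (Finsupp.single a 1) B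
          + QF μ hμ (Finsupp.mapDomain (daggerP ν hν) A)
            (Finsupp.single (daggerP ν hν b) 1) A (Finsupp.single b 1)
          - QF μ hμ (Finsupp.mapDomain (daggerP ν hν) A)
            (Finsupp.mapDomain (daggerP ν hν) B) A B
          - Finsupp.single (hashP μ hμ (hashP μ hμ (hashP μ hμ (daggerP ν hν a)
              (daggerP ν hν b)) a) b) 1
        = -(QF μ hμ δ₁ δ₂ A B + QF μ hμ δ₁ (Finsupp.single (daggerP ν hν b) 1) A δ₄
            + QF μ hμ (Finsupp.single (daggerP ν hν a) 1) δ₂ δ₃ B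
            + QF μ hμ (Finsupp.single (daggerP ν hν a) 1) (Finsupp.single (daggerP ν hν b) 1)
              δ₃ δ₄) := by
      rw [← QF_single μ hμ (daggerP ν hν a) (daggerP ν hν b) a b]
      rw [hDA1, hDB1]
      conv_lhs => rw [hA3, hB4]
      conv_rhs => rw [hA3, hB4]
      simp only [QF, map_add, AddMonoidHom.add_apply]
      abel
    rw [hkey]
    apply inFiltP_neg
    apply inFiltP_add
    apply inFiltP_add
    apply inFiltP_add
    · exact inFiltP_hash_left μ hμ (inFiltP_hash_left μ hμ (inFiltP_hash_mul μ hμ h1f h2f))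
    · exact inFiltP_hash_mul μ hμ (inFiltP_hash_left μ hμ (inFiltP_hash_left μ hμ h1f)) h4f
    · exact inFiltP_hash_left μ hμ
        (Nat.add_comm q p ▸ inFiltP_hash_mul μ hμ (inFiltP_hash_right μ hμ h2f) h3f)
    · exact inFiltP_hash_mul μ hμ (inFiltP_hash_right μ hμ h3f) h4f
end
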